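/- Let d ≥ 2 and let ψ ∈ ℂ^d be a unit vector with pure-state density matrix ρ = |ψ⟩⟨ψ|. Then there exist unitary d×d matrices U₁, U₂, U₃ (whose columns form three orthonormal bases of ℂ^d) such that ∑_{k=1}^{3} (1 − M_Re(U_k† ρ U_k))² = 5/2. -/

import Mathlib

open Matrix Complex ComplexOrder Classical

/-- The positive semidefinite square root of a matrix (junk value `0` if not PSD). -/
noncomputable def psqrt {n : Type*} [Fintype n] [DecidableEq n] (A : Matrix n n ℂ) :
    Matrix n n ℂ :=
  if h : A.PosSemidef then
    h.1.eigenvectorUnitary.1 * diagonal ((↑) ∘ (√·) ∘ h.1.eigenvalues) *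
      (star h.1.eigenvectorUnitary : Matrix n n ℂ)
  else 0

/-- Entrywise complex conjugate of a matrix. -/
def mconj {m n : Type*} (A : Matrix m n ℂ) : Matrix m n ℂ := A.map (starRingEnd ℂ)

/-- Fidelity `F(ρ,σ) = Tr √(√ρ σ √ρ)`. -/
noncomputable def fidelity {n : Type*} [Fintype n] [DecidableEq n] (ρ σ : Matrix n n ℂ) : ℝ :=
  ((psqrt (psqrt ρ * σ * psqrt ρ)).trace).re

/-- The real part state `Re(ρ) = (ρ + ρ*)/2`. -/
noncomputable def reState {n : Type*} (ρ : Matrix n n ℂ) : Matrix n n ℂ :=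
  ((1 : ℂ)/2) • (ρ + mconj ρ)

/-- The imaginarity measure `M_Re(ρ) = 1 - F(ρ, Re(ρ))`. -/
noncomputable def MRe {n : Type*} [Fintype n] [DecidableEq n] (ρ : Matrix n n ℂ) : ℝ :=
  1 - fidelity ρ (reState ρ)

/-- A density matrix: positive semidefinite with trace 1. -/
def IsDensityMatrix {n : Type*} [Fintype n] (ρ : Matrix n n ℂ) : Prop :=
  ρ.PosSemidef ∧ ρ.trace = 1

section helpers

open scoped MatrixOrder in
lemma psqrt_eq_cfc_sqrt {n : Type*} [Fintype n] [DecidableEq n] {A : Matrix n n ℂ}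
    (hA : A.PosSemidef) : psqrt A = CFC.sqrt A := by
  rw [psqrt, dif_pos hA, CFC.sqrt_eq_cfc, cfc_nnreal_eq_real _ A, hA.1.cfc_eq,
    IsHermitian.cfc, Unitary.conjStarAlgAut_apply]
  congr 3
  funext i
  simp [hA.eigenvalues_nonneg i]

open scoped MatrixOrder in
lemma psqrt_eq_of_sq_eq {n : Type*} [Fintype n] [DecidableEq n] {A B : Matrix n n ℂ}
    (hA : A.PosSemidef) (hB : B.PosSemidef) (h : A ^ 2 = B) : A = psqrt B := by
  rw [psqrt_eq_cfc_sqrt hB, eq_comm, CFC.sqrt_eq_iff _ _ hB.nonneg hA.nonneg, ← pow_two, h]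

variable {n : Type*} [Fintype n] [DecidableEq n]

lemma vmv_eq (x y : n → ℂ) : vecMulVec x y = replicateCol Unit x * replicateRow Unit y :=
  vecMulVec_eq Unit x y

lemma vmv_star_eq (x : n → ℂ) : vecMulVec x (star x) = replicateCol Unit x * (replicateCol Unit x)ᴴ := by
  rw [conjTranspose_replicateCol, vmv_eq]

lemma vmv_psd (x : n → ℂ) : (vecMulVec x (star x)).PosSemidef := by
  rw [vmv_star_eq]; exact posSemidef_self_mul_conjTranspose _

lemma vmv_mul_vmv (a b c e : n → ℂ) :
    vecMulVec a b * vecMulVec c e = (b ⬝ᵥ c) • vecMulVec a e := by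
  ext i j
  simp only [Matrix.mul_apply, vecMulVec_apply, Matrix.smul_apply, dotProduct, smul_eq_mul,
    Finset.sum_mul]
  exact Finset.sum_congr rfl fun k _ => by ring

lemma vmv_trace (a b : n → ℂ) : (vecMulVec a b).trace = a ⬝ᵥ b := by
  simp [Matrix.trace, Matrix.diag, vecMulVec_apply, dotProduct]

lemma mconj_vmv (x : n → ℂ) : mconj (vecMulVec x (star x)) = vecMulVec (star x) x := by
  ext i j
  simp [mconj, Matrix.map_apply, vecMulVec_apply, mul_comm]

lemma conj_mul_vmv (A : Matrix n n ℂ) (x : n → ℂ) :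
    Aᴴ * vecMulVec x (star x) * A = vecMulVec (Aᴴ *ᵥ x) (star (Aᴴ *ᵥ x)) := by
  rw [vmv_star_eq, vmv_star_eq]
  have h : Aᴴ * replicateCol Unit x = replicateCol Unit (Aᴴ *ᵥ x) := (replicateCol_mulVec Aᴴ x).symm
  calc Aᴴ * (replicateCol Unit x * (replicateCol Unit x)ᴴ) * A
      = (Aᴴ * replicateCol Unit x) * (Aᴴ * replicateCol Unit x)ᴴ := by
        rw [conjTranspose_mul, conjTranspose_conjTranspose]
        simp only [Matrix.mul_assoc]
    _ = replicateCol Unit (Aᴴ *ᵥ x) * (replicateCol Unit (Aᴴ *ᵥ x))ᴴ := by rw [h]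

lemma psd_smul {A : Matrix n n ℂ} (hA : A.PosSemidef) (r : ℝ) (hr : 0 ≤ r) :
    ((r : ℂ) • A).PosSemidef := by
  constructor
  · unfold Matrix.IsHermitian
    rw [conjTranspose_smul, hA.1]
    norm_num
  · exact (hA.smul (show (0 : ℂ) ≤ (r : ℂ) by exact_mod_cast hr)).2

lemma psqrt_smul_proj (x : n → ℂ) (hx : star x ⬝ᵥ x = 1) (r : ℝ) (hr : 0 ≤ r) :
    psqrt ((r : ℂ) • vecMulVec x (star x))
      = ((Real.sqrt r : ℝ) : ℂ) • vecMulVec x (star x) := by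
  have hpsd := psd_smul (vmv_psd x) r hr
  have hproj : vecMulVec x (star x) * vecMulVec x (star x) = vecMulVec x (star x) := by
    rw [vmv_mul_vmv, hx, one_smul]
  refine (psqrt_eq_of_sq_eq (psd_smul (vmv_psd x) _ (Real.sqrt_nonneg r))
    hpsd ?_).symm
  rw [pow_two, smul_mul_smul_comm, hproj, ← Complex.ofReal_mul,
    Real.mul_self_sqrt hr]

lemma fid_pure (x : n → ℂ) (hx : star x ⬝ᵥ x = 1) (r : ℝ) (hr : 0 ≤ r)
    (hs : (starRingEnd ℂ) (x ⬝ᵥ x) * (x ⬝ᵥ x) = ((2 * r - 1 : ℝ) : ℂ)) :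
    fidelity (vecMulVec x (star x)) (reState (vecMulVec x (star x))) = Real.sqrt r := by
  have hproj : vecMulVec x (star x) * vecMulVec x (star x) = vecMulVec x (star x) := by
    rw [vmv_mul_vmv, hx, one_smul]
  have hpsd : (vecMulVec x (star x)).PosSemidef := vmv_psd x
  have hsq : psqrt (vecMulVec x (star x)) = vecMulVec x (star x) := by
    exact (psqrt_eq_of_sq_eq hpsd hpsd (by rw [pow_two, hproj])).symm
  have h1 : vecMulVec x (star x) * vecMulVec (star x) x * vecMulVec x (star x)
      = ((2 * r - 1 : ℝ) : ℂ) • vecMulVec x (star x) := by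
    rw [vmv_mul_vmv, Matrix.smul_mul, vmv_mul_vmv, smul_smul]
    congr 2
    rw [star_dotProduct_star]
    exact hs
  have hmid : vecMulVec x (star x) * reState (vecMulVec x (star x)) * vecMulVec x (star x)
      = ((r : ℝ) : ℂ) • vecMulVec x (star x) := by
    rw [reState, mconj_vmv]
    calc vecMulVec x (star x) * (((1 : ℂ)/2) • (vecMulVec x (star x) + vecMulVec (star x) x))
          * vecMulVec x (star x)
        = ((1 : ℂ)/2) • (vecMulVec x (star x) * vecMulVec x (star x) * vecMulVec x (star x)
            + vecMulVec x (star x) * vecMulVec (star x) x * vecMulVec x (star x)) := by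
          rw [Matrix.mul_smul, Matrix.smul_mul, Matrix.mul_add, Matrix.add_mul]
      _ = ((1 : ℂ)/2) • (vecMulVec x (star x)
            + ((2 * r - 1 : ℝ) : ℂ) • vecMulVec x (star x)) := by rw [hproj, hproj, h1]
      _ = ((r : ℝ) : ℂ) • vecMulVec x (star x) := by
          rw [smul_add, smul_smul, ← add_smul]
          congr 1
          push_cast
          ring
  rw [fidelity, hsq, hmid, psqrt_smul_proj x hx r hr, Matrix.trace_smul, vmv_trace,
    dotProduct_comm, hx, smul_eq_mul, mul_one]
  simp

end helpers

lemma exists_unitary_col (d : ℕ) (i0 : Fin d) (x : Fin d → ℂ) (hx : star x ⬝ᵥ x = 1) :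
    ∃ B ∈ Matrix.unitaryGroup (Fin d) ℂ, Bᴴ *ᵥ x = Pi.single i0 1 := by
  set x' : EuclideanSpace ℂ (Fin d) := (WithLp.equiv 2 _).symm x with hx'
  have hcard : Module.finrank ℂ (EuclideanSpace ℂ (Fin d)) = Fintype.card (Fin d) := by
    simp [finrank_euclideanSpace]
  have horth : Orthonormal ℂ (({i0} : Set (Fin d)).restrict (fun _ : Fin d => x')) := by
    rw [orthonormal_iff_ite]
    rintro ⟨i, hi⟩ ⟨j, hj⟩
    simp only [Set.mem_singleton_iff] at hi hj
    subst hi; subst hj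
    simp only [Set.restrict_apply, if_pos rfl]
    have : (inner ℂ x' x' : ℂ) = star x ⬝ᵥ x := by
      rw [PiLp.inner_apply]
      simp [dotProduct, RCLike.inner_apply, hx', mul_comm]
      refine Finset.sum_congr rfl fun i _ => ?_
      rw [Complex.mul_conj, Complex.normSq_eq_norm_sq]
      push_cast
      ring
    simp_all
    exact this
  obtain ⟨b, hb⟩ := horth.exists_orthonormalBasis_extension_of_card_eq hcard
  have hb0 : b i0 = x' := hb i0 rfl
  set B : Matrix (Fin d) (Fin d) ℂ := Matrix.of fun i j => (WithLp.equiv 2 _) (b j) i with hB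
  have hip : ∀ j k, (inner ℂ (b j) (b k) : ℂ) = ∑ i, (starRingEnd ℂ) (B i j) * B i k := by
    intro j k
    rw [PiLp.inner_apply]
    simp [RCLike.inner_apply, hB]
    exact Finset.sum_congr rfl fun i _ => mul_comm _ _
  have hBmem : B ∈ Matrix.unitaryGroup (Fin d) ℂ := by
    rw [Matrix.mem_unitaryGroup_iff']
    ext j k
    rw [Matrix.star_eq_conjTranspose, Matrix.mul_apply]
    have h := (orthonormal_iff_ite.mp b.orthonormal) j k
    rw [hip] at h
    have hss : ∑ i, Bᴴ j i * B i k = ∑ i, (starRingEnd ℂ) (B i j) * B i k := rfl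
    rw [hss, h, Matrix.one_apply]
  refine ⟨B, hBmem, ?_⟩
  funext j
  have hBx : ∀ i, B i i0 = x i := by
    intro i
    simp only [hB, Matrix.of_apply, hb0, hx', Equiv.apply_symm_apply]
  have key : (Bᴴ *ᵥ x) j = ∑ i, (starRingEnd ℂ) (B i j) * B i i0 := by
    simp only [Matrix.mulVec, dotProduct, hBx]
    rfl
  have h := (orthonormal_iff_ite.mp b.orthonormal) j i0
  rw [hip] at h
  rw [key, h, Pi.single_apply]

theorem stmt18 (d : ℕ) (hd : 2 ≤ d) (ψ : Fin d → ℂ) (hψ : star ψ ⬝ᵥ ψ = 1) :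
    ∃ U : Fin 3 → Matrix (Fin d) (Fin d) ℂ,
      (∀ k, U k ∈ Matrix.unitaryGroup (Fin d) ℂ) ∧
      ∑ k, (1 - MRe ((U k)ᴴ * Matrix.vecMulVec ψ (star ψ) * U k)) ^ 2 = 5 / 2 := by
  have h0 : (0 : ℕ) < d := by omega
  set i0 : Fin d := ⟨0, by omega⟩
  set i1 : Fin d := ⟨1, by omega⟩
  have hne : i0 ≠ i1 := by simp [i0, i1, Fin.ext_iff]
  -- the target vector for the third basis
  set c0 : ℂ := (((Real.sqrt 2)⁻¹ : ℝ) : ℂ)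
  set c1 : ℂ := Complex.I * (((Real.sqrt 2)⁻¹ : ℝ) : ℂ)
  set φ : Fin d → ℂ := Pi.single i0 c0 + Pi.single i1 c1 with hφ
  have h2 : ((Real.sqrt 2 : ℝ) : ℂ) * ((Real.sqrt 2 : ℝ) : ℂ) = 2 := by
    rw [← Complex.ofReal_mul, Real.mul_self_sqrt (by norm_num)]
    norm_num
  have hsqrt2_ne : ((Real.sqrt 2 : ℝ) : ℂ) ≠ 0 := by
    intro h
    rw [h, zero_mul] at h2
    norm_num at h2
  have hc1sq : c1 * c1 = -(c0 * c0) := by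
    simp only [c0, c1]
    ring_nf
    rw [Complex.I_sq]
    ring
  have hc0 : (starRingEnd ℂ) c0 = c0 := Complex.conj_ofReal _
  have hc1 : (starRingEnd ℂ) c1 = -c1 := by
    simp only [c1, _root_.map_mul, Complex.conj_I, Complex.conj_ofReal]
    ring
  have hcsum : c0 * c0 = 1/2 := by
    simp only [c0, ← Complex.ofReal_mul]
    rw [← mul_inv, Real.mul_self_sqrt (by norm_num)]
    norm_num
  have hdot : ∀ a b : ℂ, star (Pi.single i0 a + Pi.single i1 b)
      ⬝ᵥ (Pi.single i0 a + Pi.single i1 b)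
      = (starRingEnd ℂ) a * a + (starRingEnd ℂ) b * b := by
    intro a b
    simp [star_add, Pi.single_star, add_dotProduct, dotProduct_add, single_dotProduct,
      Pi.single_apply, hne, hne.symm, star_def]
  have hdot' : φ ⬝ᵥ φ = c0 * c0 + c1 * c1 := by
    rw [hφ]
    simp [add_dotProduct, dotProduct_add, single_dotProduct, Pi.single_apply, hne, hne.symm]
  have hφunit : star φ ⬝ᵥ φ = 1 := by
    rw [hφ, hdot, hc0, hc1, neg_mul, hc1sq, hcsum]
    norm_num
  have hφs : (starRingEnd ℂ) (φ ⬝ᵥ φ) * (φ ⬝ᵥ φ) = ((2 * (1/2) - 1 : ℝ) : ℂ) := by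
    rw [hdot', hc1sq]
    norm_num
  have heunit : star (Pi.single i0 (1:ℂ)) ⬝ᵥ Pi.single i0 (1:ℂ) = 1 := by
    simp [Pi.single_star, single_dotProduct, Pi.single_apply]
  have hes : (starRingEnd ℂ) ((Pi.single i0 (1:ℂ)) ⬝ᵥ (Pi.single i0 (1:ℂ)))
      * ((Pi.single i0 (1:ℂ)) ⬝ᵥ (Pi.single i0 (1:ℂ))) = ((2 * 1 - 1 : ℝ) : ℂ) := by
    simp [single_dotProduct, Pi.single_apply]
    norm_num
  obtain ⟨B, hBmem, hBψ⟩ := exists_unitary_col d i0 ψ hψ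
  obtain ⟨C, hCmem, hCφ⟩ := exists_unitary_col d i0 φ hφunit
  have hCC : C * Cᴴ = 1 := by
    have := (Matrix.mem_unitaryGroup_iff.mp hCmem)
    rwa [Matrix.star_eq_conjTranspose] at this
  have hCφ' : C *ᵥ Pi.single i0 (1:ℂ) = φ := by
    rw [← hCφ, Matrix.mulVec_mulVec, hCC, Matrix.one_mulVec]
  refine ⟨![B, B, B * Cᴴ], ?_, ?_⟩
  · intro k
    fin_cases k
    · exact hBmem
    · exact hBmem
    · exact mul_mem hBmem (Unitary.star_mem hCmem)
  · have hterm1 : (1 - MRe (Bᴴ * Matrix.vecMulVec ψ (star ψ) * B)) ^ 2 = 1 := by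
      rw [MRe, conj_mul_vmv, hBψ, fid_pure _ heunit 1 (by norm_num) hes]
      simp
    have hterm3 : (1 - MRe ((B * Cᴴ)ᴴ * Matrix.vecMulVec ψ (star ψ) * (B * Cᴴ))) ^ 2
        = 1 / 2 := by
      have hv : (B * Cᴴ)ᴴ *ᵥ ψ = φ := by
        rw [conjTranspose_mul, conjTranspose_conjTranspose, ← Matrix.mulVec_mulVec, hBψ, hCφ']
      rw [MRe, conj_mul_vmv, hv, fid_pure _ hφunit (1/2) (by norm_num) hφs]
      rw [sub_sub_cancel, Real.sq_sqrt (by norm_num)]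
    rw [Fin.sum_univ_three]
    simp only [Matrix.cons_val_zero, Matrix.cons_val_one, Matrix.head_cons,
      Matrix.cons_val_two, Matrix.tail_cons]
    rw [hterm1, hterm3]
    norm_num
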